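/- Suppose functions φ_j ∈ L₂ (j ∈ ℕ) satisfy the refinement equation with masks â_{j+1} ∈ S(2^{j+1}), and for each j ∈ ℤ₊ the functions ψ^m_j ∈ L₂ (m = 1,…,ρ_j, ρ_j positive integers) are defined by the wavelet equation with masks b̂^m_{j+1} ∈ S(2^{j+1}); let θ_j be the fundamental coefficients. If Ψ = {S^k_j ψ^m_j : j ∈ ℤ₊, m = 1,…,ρ_j, k ∈ R_j} forms a Parseval wavelet frame in L₂, then (i) lim_{j→∞} 2^j |φ̂_j(n)|² θ_j(n) = 1 for every n ∈ ℤ, and (ii) θ_j(n) · conj(â_{j+1}(n)) · â_{j+1}(n + 2^j) + Σ_{m=1}^{ρ_j} conj(b̂^m_{j+1}(n)) · b̂^m_{j+1}(n + 2^j) = 0 for every n ∈ ℤ and every j ∈ ℤ₊ for which there exists an odd integer k with φ̂_{j+1}(n) ≠ 0 and φ̂_{j+1}(2^j k + n) ≠ 0. -/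

import Mathlib

open MeasureTheory Complex Finset Filter ComplexConjugate

noncomputable section

instance : Fact ((0:ℝ) < 1) := ⟨one_pos⟩

/-- The space `L₂` of 1-periodic square-integrable complex functions, realized as
`Lp ℂ 2` over the additive circle of length 1 with normalized Haar measure. -/
abbrev PL2 : Type := Lp ℂ 2 (@AddCircle.haarAddCircle (1 : ℝ) _)

/-- Fourier coefficient `f̂(n) = ∫₀¹ f(x) e^{-2πinx} dx`. -/
def fCoeff (f : PL2) (n : ℤ) : ℂ := fourierCoeff (f : AddCircle (1 : ℝ) → ℂ) n

/-- Inner product `⟨f, S^k_j g⟩ = ∫₀¹ f(x) conj(g(x + 2^{-j} k)) dx`. -/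
def shiftInner (f g : PL2) (j : ℕ) (k : ℤ) : ℂ :=
  ∫ x : AddCircle (1 : ℝ),
    f x * conj (g (x + (((2:ℝ)^(-(j:ℤ)) * (k:ℝ) : ℝ) : AddCircle (1 : ℝ))))
    ∂AddCircle.haarAddCircle

/-- `R_j = {-2^{j-1}+1, …, 2^{j-1}}` for `j ≥ 1` and `R₀ = {0}`. -/
def Rset (j : ℕ) : Finset ℤ :=
  if j = 0 then {0} else Finset.Icc (-(2^(j-1) : ℤ) + 1) (2^(j-1))

/-- The system `{S^k_j ψ^m_j : j ∈ ℤ₊, 1 ≤ m ≤ ρ_j, k ∈ R_j}` is a Parseval wavelet frame. -/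
def IsParsevalFrame (ρ : ℕ → ℕ) (ψ : ℕ → ℕ → PL2) : Prop :=
  ∀ f : PL2, ‖f‖^2 =
    ∑' j : ℕ, ∑ m ∈ Finset.Icc 1 (ρ j), ∑ k ∈ Rset j,
      ‖shiftInner f (ψ j m) j k‖^2

/-- Fundamental coefficients: `θ₀(n) = 0`,
`θ_{j+1}(n) = Σ_{m=1}^{ρ_j} |b̂^m_{j+1}(n)|² + θ_j(n)·|â_{j+1}(n)|²`. -/
def theta (ρ : ℕ → ℕ) (a : ℕ → ℤ → ℂ) (b : ℕ → ℕ → ℤ → ℂ) : ℕ → ℤ → ℝ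
  | 0, _ => 0
  | (j+1), n =>
      (∑ m ∈ Finset.Icc 1 (ρ j), ‖b (j+1) m n‖^2)
        + theta ρ a b j n * ‖a (j+1) n‖^2

/-! ### Auxiliary material -/

abbrev μ1 : Measure (AddCircle (1:ℝ)) := AddCircle.haarAddCircle

/-- The exponentials as elements of `PL2`. -/
def eF (n : ℤ) : PL2 := fourierLp 2 n

lemma norm_eF (n : ℤ) : ‖eF n‖ = 1 := orthonormal_fourier.1 n

lemma inner_eF {n n' : ℤ} (h : n ≠ n') : (inner ℂ (eF n) (eF n') : ℂ) = 0 :=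
  orthonormal_fourier.2 h

lemma fourier_apply_add (n : ℤ) (x y : AddCircle (1:ℝ)) :
    fourier n (x + y) = fourier n x * fourier n y := by
  simp_rw [fourier_apply, zsmul_add, AddCircle.toCircle_add, Circle.coe_mul]

lemma fourier_apply_neg (n : ℤ) (x : AddCircle (1:ℝ)) :
    fourier n (-x) = fourier (-n) x := by
  simp_rw [fourier_apply, zsmul_neg, neg_zsmul]

lemma abs_fourier1 (m : ℤ) (x : AddCircle (1:ℝ)) : ‖fourier m x‖ = 1 := by
  rw [fourier_apply]; exact Circle.norm_coe _

lemma conj_mul_self_eq (z : ℂ) : conj z * z = (((‖z‖)^2 : ℝ) : ℂ) := by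
  rw [mul_comm, Complex.mul_conj, Complex.sq_norm]

/-- translate of an Lp element -/
def trL (t : AddCircle (1:ℝ)) (g : PL2) : PL2 :=
  Lp.compMeasurePreserving (fun x => x + t) (measurePreserving_add_right μ1 t) g

lemma coeFn_trL (t : AddCircle (1:ℝ)) (g : PL2) :
    trL t g =ᵐ[μ1] fun x => g (x + t) :=
  Lp.coeFn_compMeasurePreserving g _

lemma integrable_mul_conj_shift (f g : PL2) (t : AddCircle (1:ℝ)) :
    Integrable (fun x => f x * conj (g (x + t))) μ1 := by
  have h := MeasureTheory.L2.integrable_inner (𝕜 := ℂ) (trL t g) f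
  refine h.congr ?_
  filter_upwards [coeFn_trL t g] with x hx
  simp [hx, RCLike.inner_apply, mul_comm]

lemma shiftInner_add_smul (f g h : PL2) (c : ℂ) (j : ℕ) (k : ℤ) :
    shiftInner (f + c • g) h j k = shiftInner f h j k + c * shiftInner g h j k := by
  set t : AddCircle (1:ℝ) := (((2:ℝ)^(-(j:ℤ)) * (k:ℝ) : ℝ) : AddCircle (1 : ℝ))
  have h1 : shiftInner (f + c • g) h j k
      = ∫ x, (f x + c * g x) * conj (h (x + t)) ∂μ1 := by
    rw [shiftInner]
    refine integral_congr_ae ?_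
    filter_upwards [Lp.coeFn_add f (c • g), Lp.coeFn_smul c g] with x hx1 hx2
    simp only [hx1, Pi.add_apply, hx2, Pi.smul_apply, smul_eq_mul]
    rfl
  rw [h1]
  have h2 : ∀ x, (f x + c * g x) * conj (h (x + t))
      = f x * conj (h (x + t)) + c * (g x * conj (h (x + t))) := by intro x; ring
  simp_rw [h2]
  rw [integral_add (integrable_mul_conj_shift f h t)
    ((integrable_mul_conj_shift g h t).const_mul c), integral_const_mul]
  rfl

lemma shiftInner_eF (n : ℤ) (g : PL2) (j : ℕ) (k : ℤ) :
    shiftInner (eF n) g j k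
      = fourier (-n) ((((2:ℝ)^(-(j:ℤ)) * (k:ℝ) : ℝ)) : AddCircle (1:ℝ))
        * conj (fCoeff g n) := by
  set t : AddCircle (1:ℝ) := (((2:ℝ)^(-(j:ℤ)) * (k:ℝ) : ℝ) : AddCircle (1 : ℝ)) with ht
  have h1 : shiftInner (eF n) g j k = ∫ x, fourier n x * conj (g (x + t)) ∂μ1 := by
    rw [shiftInner]
    refine integral_congr_ae ?_
    filter_upwards [coeFn_fourierLp 2 n] with x hx
    have : (eF n : AddCircle (1:ℝ) → ℂ) x = fourier n x := hx
    rw [this]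
  have h2 : ∫ x, fourier n x * conj (g (x + t)) ∂μ1
      = ∫ y, fourier n (y + (-t)) * conj (g y) ∂μ1 := by
    rw [← integral_add_right_eq_self (μ := μ1)
      (fun y => fourier n (y + (-t)) * conj (g y)) t]
    simp [add_assoc]
  have h3 : ∫ y, fourier n (y + (-t)) * conj (g y) ∂μ1
      = fourier n (-t) * ∫ y, fourier n y * conj (g y) ∂μ1 := by
    rw [← integral_const_mul]
    congr 1; funext y
    rw [fourier_apply_add]; ring
  have h4 : ∫ y, fourier n y * conj (g y) ∂μ1 = conj (fCoeff g n) := by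
    rw [fCoeff, fourierCoeff, ← integral_conj]
    refine integral_congr_ae (Eventually.of_forall fun y => ?_)
    simp only [smul_eq_mul, map_mul, fourier_neg, Complex.conj_conj]
  rw [h1, h2, h3, h4, fourier_apply_neg]

lemma card_Rset (j : ℕ) : (Rset j).card = 2^j := by
  cases j with
  | zero => simp [Rset]
  | succ j' =>
      rw [Rset, if_neg (Nat.succ_ne_zero j'), Int.card_Icc]
      have h : ((2:ℤ)^(j'+1-1) + 1 - (-(2^(j'+1-1)) + 1)) = (2^(j'+1) : ℕ) := by
        push_cast
        ring
      rw [h, Int.toNat_natCast]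

lemma sum_fourier_Rset (j : ℕ) (d : ℤ) :
    ∑ k ∈ Rset j, fourier d ((((2:ℝ)^(-(j:ℤ)) * (k:ℝ) : ℝ)) : AddCircle (1:ℝ))
      = if (2^j : ℤ) ∣ d then ((2:ℂ)^j) else 0 := by
  set ω : ℂ := Complex.exp (2 * Real.pi * Complex.I * d / 2^j) with hω
  have hterm : ∀ k : ℤ, fourier d ((((2:ℝ)^(-(j:ℤ)) * (k:ℝ) : ℝ)) : AddCircle (1:ℝ)) = ω ^ k := by
    intro k
    rw [fourier_coe_apply, hω, ← Complex.exp_int_mul]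
    congr 1
    push_cast
    rw [zpow_neg, zpow_natCast]
    field_simp
  simp_rw [hterm]
  by_cases hdvd : (2^j : ℤ) ∣ d
  · rw [if_pos hdvd]
    obtain ⟨e, rfl⟩ := hdvd
    have hω1 : ω = 1 := by
      rw [hω]
      have h2 : (2:ℂ)^j ≠ 0 := pow_ne_zero _ two_ne_zero
      have : (2 * Real.pi * Complex.I * ((2:ℤ)^j * e : ℤ) / 2^j) = e * (2 * Real.pi * Complex.I) := by
        push_cast
        field_simp
      rw [this, Complex.exp_int_mul_two_pi_mul_I]
    simp only [hω1, one_zpow, Finset.sum_const, card_Rset, nsmul_eq_mul, mul_one]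
    push_cast
    ring
  · rw [if_neg hdvd]
    have hωne : ω ≠ 1 := by
      intro h1
      rw [hω, Complex.exp_eq_one_iff] at h1
      obtain ⟨m, hm⟩ := h1
      apply hdvd
      refine ⟨m, ?_⟩
      have h2 : (2:ℂ)^j ≠ 0 := pow_ne_zero _ two_ne_zero
      have hπ : (2 * (Real.pi:ℂ) * Complex.I) ≠ 0 :=
        mul_ne_zero (mul_ne_zero two_ne_zero (Complex.ofReal_ne_zero.2 Real.pi_ne_zero))
          Complex.I_ne_zero
      have h4 : 2 * (Real.pi:ℂ) * Complex.I * d = m * (2 * (Real.pi:ℂ) * Complex.I) * 2^j :=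
        (div_eq_iff h2).mp hm
      have : (d:ℂ) = (2:ℂ)^j * m := mul_left_cancel₀ hπ (by linear_combination h4)
      exact_mod_cast this
    have hω0 : ω ≠ 0 := Complex.exp_ne_zero _
    have hj : j ≠ 0 := by
      intro h; subst h; exact hdvd (one_dvd d)
    rw [Rset, if_neg hj, Int.Icc_eq_finset_map, Finset.sum_map]
    have hN : ((2:ℤ)^(j-1) + 1 - (-(2^(j-1)) + 1)).toNat = 2^j := by
      obtain ⟨j', rfl⟩ := Nat.exists_eq_succ_of_ne_zero hj
      have h : ((2:ℤ)^(j'+1-1) + 1 - (-(2^(j'+1-1)) + 1)) = (2^(j'+1) : ℕ) := by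
        push_cast; ring
      rw [h, Int.toNat_natCast]
    rw [hN]
    have hsum : ∀ i : ℕ, ω ^ ((Nat.castEmbedding.trans <| addLeftEmbedding (-(2^(j-1) : ℤ) + 1)) i)
        = ω ^ (-(2^(j-1) : ℤ) + 1) * ω ^ i := by
      intro i
      simp only [Function.Embedding.trans_apply, Nat.castEmbedding_apply, addLeftEmbedding_apply]
      rw [zpow_add₀ hω0, zpow_natCast]
    simp_rw [hsum]
    rw [← Finset.mul_sum, geom_sum_eq hωne]
    have hpow : ω ^ (2^j : ℕ) = 1 := by
      rw [hω, ← Complex.exp_nat_mul]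
      have h2 : (2:ℂ)^j ≠ 0 := pow_ne_zero _ two_ne_zero
      have : ((2^j : ℕ) : ℂ) * (2 * Real.pi * Complex.I * d / 2^j) = d * (2 * Real.pi * Complex.I) := by
        push_cast
        field_simp
      rw [this, Complex.exp_int_mul_two_pi_mul_I]
    rw [hpow]
    simp

lemma polar_complex (u v : ℂ) :
    u * conj v = (1/4) * ( (((‖u + 1*v‖)^2 : ℝ) : ℂ)
      + Complex.I * (((‖u + Complex.I*v‖)^2 : ℝ) : ℂ)
      - (((‖u + (-1)*v‖)^2 : ℝ) : ℂ)
      - Complex.I * (((‖u + (-Complex.I)*v‖)^2 : ℝ) : ℂ) ) := by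
  have h : ∀ z : ℂ, (((‖z‖)^2 : ℝ) : ℂ) = z * conj z := by
    intro z
    rw [Complex.sq_norm, Complex.mul_conj]
  rw [h, h, h, h]
  simp only [map_add, map_mul, map_neg, map_one, Complex.conj_I]
  linear_combination ((u * conj v - v * conj u)/2) * Complex.I_mul_I

lemma periodic_int {F : ℤ → ℂ} {p : ℤ} (h : ∀ n, F (n + p) = F n) :
    ∀ (n q : ℤ), F (n + p * q) = F n := by
  intro n q
  induction q using Int.induction_on with
  | zero => simp
  | succ i ih =>
      have h2 := h (n + p * i)
      have e : n + p * i + p = n + p * (i + 1) := by ring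
      rw [e] at h2
      rw [h2]; exact ih
  | pred i ih =>
      have h2 := h (n + p * (-(i:ℤ) - 1))
      have e : n + p * (-(i:ℤ) - 1) + p = n + p * (-(i:ℤ)) := by ring
      rw [e] at h2
      rw [← h2]; exact ih

lemma four_sum_combine {α : Type*} (s : Finset α) (f1 f2 f3 f4 : α → ℝ) :
    (1/4:ℂ) * (((∑ x ∈ s, f1 x : ℝ):ℂ) + Complex.I * ((∑ x ∈ s, f2 x : ℝ):ℂ)
      - ((∑ x ∈ s, f3 x : ℝ):ℂ) - Complex.I * ((∑ x ∈ s, f4 x : ℝ):ℂ))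
    = ∑ x ∈ s, (1/4:ℂ) * (((f1 x : ℝ):ℂ) + Complex.I * ((f2 x : ℝ):ℂ)
        - ((f3 x : ℝ):ℂ) - Complex.I * ((f4 x : ℝ):ℂ)) := by
  induction s using Finset.cons_induction with
  | empty => simp
  | cons a s ha ih =>
      simp only [Finset.sum_cons, Complex.ofReal_add]
      rw [← ih]
      ring

lemma frame_hasSum {ρ : ℕ → ℕ} {ψ : ℕ → ℕ → PL2} (hframe : IsParsevalFrame ρ ψ)
    (f : PL2) {c : ℝ} (hc : ‖f‖^2 = c) (hc0 : c ≠ 0) :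
    HasSum (fun j => ∑ m ∈ Finset.Icc 1 (ρ j), ∑ k ∈ Rset j,
      (‖shiftInner f (ψ j m) j k‖)^2) c := by
  have h := hframe f
  rw [hc] at h
  have hs : Summable (fun j => ∑ m ∈ Finset.Icc 1 (ρ j), ∑ k ∈ Rset j,
      (‖shiftInner f (ψ j m) j k‖)^2) := by
    by_contra hs
    rw [tsum_eq_zero_of_not_summable hs] at h
    exact hc0 h
  have h2 := hs.hasSum
  rwa [← h] at h2

theorem parseval_frame_necessity_fundamental
    (ρ : ℕ → ℕ) (hρ : ∀ j, 0 < ρ j)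
    (φ : ℕ → PL2) (ψ : ℕ → ℕ → PL2)
    (a : ℕ → ℤ → ℂ) (b : ℕ → ℕ → ℤ → ℂ)
    (ha_per : ∀ j : ℕ, 1 ≤ j → ∀ n : ℤ, a (j+1) (n + 2^(j+1)) = a (j+1) n)
    (hb_per : ∀ j : ℕ, ∀ m, 1 ≤ m → m ≤ ρ j → ∀ n : ℤ,
        b (j+1) m (n + 2^(j+1)) = b (j+1) m n)
    (href : ∀ j : ℕ, 1 ≤ j → ∀ n : ℤ,
        fCoeff (φ j) n = (Real.sqrt 2 : ℂ) * a (j+1) n * fCoeff (φ (j+1)) n)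
    (hwav : ∀ j : ℕ, ∀ m, 1 ≤ m → m ≤ ρ j → ∀ n : ℤ,
        fCoeff (ψ j m) n = (Real.sqrt 2 : ℂ) * b (j+1) m n * fCoeff (φ (j+1)) n)
    (hframe : IsParsevalFrame ρ ψ) :
    (∀ n : ℤ, Filter.Tendsto
        (fun j : ℕ => (2:ℝ)^j * ‖fCoeff (φ j) n‖^2 * theta ρ a b j n)
        Filter.atTop (nhds 1)) ∧
    (∀ j : ℕ, ∀ n : ℤ,
        (∃ k : ℤ, Odd k ∧ fCoeff (φ (j+1)) n ≠ 0 ∧ fCoeff (φ (j+1)) (2^j * k + n) ≠ 0) →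
        ((theta ρ a b j n : ℝ) : ℂ) * conj (a (j+1) n) * a (j+1) (n + 2^j)
          + ∑ m ∈ Finset.Icc 1 (ρ j), conj (b (j+1) m n) * b (j+1) m (n + 2^j) = 0) := by
  have hsqrt2 : ((Real.sqrt 2 : ℝ) : ℂ) * ((Real.sqrt 2 : ℝ) : ℂ) = 2 := by
    rw [← Complex.ofReal_mul, Real.mul_self_sqrt (by norm_num : (0:ℝ) ≤ 2)]
    norm_num
  constructor
  · -- Part (i)
    intro n
    have habs : ∀ (g : PL2) (j : ℕ) (k : ℤ),
        ‖shiftInner (eF n) g j k‖ = ‖fCoeff g n‖ := by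
      intro g j k
      rw [shiftInner_eF, norm_mul, abs_fourier1, Complex.norm_conj, one_mul]
    have hT : ∀ j, (∑ m ∈ Finset.Icc 1 (ρ j), ∑ k ∈ Rset j,
        (‖shiftInner (eF n) (ψ j m) j k‖)^2)
        = (2:ℝ)^j * ∑ m ∈ Finset.Icc 1 (ρ j), (‖fCoeff (ψ j m) n‖)^2 := by
      intro j
      rw [Finset.mul_sum]
      refine Finset.sum_congr rfl fun m _ => ?_
      have : ∀ k ∈ Rset j, (‖shiftInner (eF n) (ψ j m) j k‖)^2
          = (‖fCoeff (ψ j m) n‖)^2 := by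
        intro k _; rw [habs]
      rw [Finset.sum_congr rfl this, Finset.sum_const, card_Rset, nsmul_eq_mul]
      push_cast; ring
    have hnorm : ‖eF n‖^2 = (1:ℝ) := by rw [norm_eF]; norm_num
    have hhs := frame_hasSum hframe (eF n) hnorm one_ne_zero
    have htend := hhs.tendsto_sum_nat
    have hpartial : ∀ J : ℕ,
        (2:ℝ)^J * (‖fCoeff (φ J) n‖)^2 * theta ρ a b J n
        = ∑ j ∈ Finset.range J, ∑ m ∈ Finset.Icc 1 (ρ j), ∑ k ∈ Rset j,
            (‖shiftInner (eF n) (ψ j m) j k‖)^2 := by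
      intro J
      induction J with
      | zero => simp [theta]
      | succ J ih =>
          rw [Finset.sum_range_succ, ← ih, hT]
          have hw : ∀ m ∈ Finset.Icc 1 (ρ J), (‖fCoeff (ψ J m) n‖)^2
              = 2 * (‖b (J+1) m n‖)^2 * (‖fCoeff (φ (J+1)) n‖)^2 := by
            intro m hm
            rw [Finset.mem_Icc] at hm
            rw [hwav J m hm.1 hm.2 n]
            rw [norm_mul, norm_mul, Complex.norm_real, Real.norm_eq_abs,
              _root_.abs_of_nonneg (Real.sqrt_nonneg 2)]
            rw [mul_pow, mul_pow, Real.sq_sqrt (by norm_num : (0:ℝ) ≤ 2)]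
          rw [Finset.sum_congr rfl hw]
          have hth : theta ρ a b (J+1) n
              = (∑ m ∈ Finset.Icc 1 (ρ J), (‖b (J+1) m n‖)^2)
                + theta ρ a b J n * (‖a (J+1) n‖)^2 := rfl
          rw [hth]
          have hphi : (‖fCoeff (φ J) n‖)^2 * theta ρ a b J n
              = 2 * (‖a (J+1) n‖)^2 * (‖fCoeff (φ (J+1)) n‖)^2
                * theta ρ a b J n := by
            cases Nat.eq_zero_or_pos J with
            | inl h0 => rw [h0]; simp [theta]
            | inr hpos =>
                rw [href J hpos n, norm_mul, norm_mul, Complex.norm_real, Real.norm_eq_abs,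
                  _root_.abs_of_nonneg (Real.sqrt_nonneg 2), mul_pow, mul_pow,
                  Real.sq_sqrt (by norm_num : (0:ℝ) ≤ 2)]
          have hsum2 : ∑ x ∈ Finset.Icc 1 (ρ J),
              2 * (‖b (J+1) x n‖)^2 * (‖fCoeff (φ (J+1)) n‖)^2
              = 2 * (‖fCoeff (φ (J+1)) n‖)^2
                * ∑ x ∈ Finset.Icc 1 (ρ J), (‖b (J+1) x n‖)^2 := by
            rw [Finset.mul_sum]
            exact Finset.sum_congr rfl fun x _ => by ring
          rw [hsum2]
          linear_combination (-(2:ℝ)^J) * hphi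
    have : (fun J : ℕ => (2:ℝ)^J * (‖fCoeff (φ J) n‖)^2 * theta ρ a b J n)
        = fun J => ∑ j ∈ Finset.range J, ∑ m ∈ Finset.Icc 1 (ρ j), ∑ k ∈ Rset j,
            (‖shiftInner (eF n) (ψ j m) j k‖)^2 := funext fun J => hpartial J
    rw [this]
    exact htend
  · -- Part (ii)
    rintro j n ⟨k₀, hk₀, hφ1, hφ2⟩
    obtain ⟨q, hq⟩ := hk₀
    set n' : ℤ := 2^j * k₀ + n with hn'
    have hd : n' - n = 2^j * k₀ := by rw [hn']; ring
    have hnn' : n ≠ n' := by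
      intro h
      rw [hn'] at h
      have h0 : (2:ℤ)^j * k₀ = 0 := by linarith
      have h2 : ((2:ℤ)^j) ≠ 0 := pow_ne_zero _ two_ne_zero
      rcases mul_eq_zero.mp h0 with h' | h'
      · exact h2 h'
      · omega
    set A : ℂ → ℕ → ℝ := fun cc j' => ∑ m ∈ Finset.Icc 1 (ρ j'), ∑ k ∈ Rset j',
      (‖shiftInner (eF n + cc • eF n') (ψ j' m) j' k‖)^2 with hA
    set P : ℕ → ℂ := fun j' => ∑ m ∈ Finset.Icc 1 (ρ j'), ∑ k ∈ Rset j',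
      (shiftInner (eF n) (ψ j' m) j' k) * conj (shiftInner (eF n') (ψ j' m) j' k) with hP
    have hkey : ∀ cc : ℂ, ‖cc‖ = 1 → HasSum (A cc) 2 := by
      intro cc hcc
      have hnorm : ‖eF n + cc • eF n'‖^2 = (2:ℝ) := by
        rw [@norm_add_sq ℂ _ _ _ _ (eF n) (cc • eF n')]
        rw [inner_smul_right, inner_eF hnn', mul_zero, norm_smul, norm_eF, norm_eF]
        simp [hcc]
        norm_num
      simp only [hA]
      exact frame_hasSum hframe _ hnorm two_ne_zero
    have hPA : ∀ j', P j' = (1/4:ℂ) * (((A 1 j' : ℝ):ℂ)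
        + Complex.I * ((A Complex.I j' : ℝ):ℂ)
        - ((A (-1) j' : ℝ):ℂ) - Complex.I * ((A (-Complex.I) j' : ℝ):ℂ)) := by
      intro j'
      have hstep : (1/4:ℂ) * (((A 1 j' : ℝ):ℂ)
          + Complex.I * ((A Complex.I j' : ℝ):ℂ)
          - ((A (-1) j' : ℝ):ℂ) - Complex.I * ((A (-Complex.I) j' : ℝ):ℂ))
          = ∑ m ∈ Finset.Icc 1 (ρ j'), ∑ k ∈ Rset j', (1/4:ℂ) *
            ((((‖shiftInner (eF n + (1:ℂ) • eF n') (ψ j' m) j' k‖)^2 : ℝ):ℂ)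
              + Complex.I * (((‖shiftInner (eF n + Complex.I • eF n') (ψ j' m) j' k‖)^2 : ℝ):ℂ)
              - (((‖shiftInner (eF n + (-1:ℂ) • eF n') (ψ j' m) j' k‖)^2 : ℝ):ℂ)
              - Complex.I * (((‖shiftInner (eF n + (-Complex.I) • eF n') (ψ j' m) j' k‖)^2 : ℝ):ℂ)) := by
        simp only [hA]
        rw [four_sum_combine]
        exact Finset.sum_congr rfl fun m _ => four_sum_combine _ _ _ _ _
      rw [hstep]
      simp only [hP]
      refine Finset.sum_congr rfl fun m _ => Finset.sum_congr rfl fun k _ => ?_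
      rw [shiftInner_add_smul, shiftInner_add_smul, shiftInner_add_smul, shiftInner_add_smul]
      exact polar_complex _ _
    have hPsum : HasSum P 0 := by
      have h1 := (hkey 1 (by simp)).mapL Complex.ofRealCLM
      have h2 := (hkey Complex.I (by simp [Complex.norm_I])).mapL Complex.ofRealCLM
      have h3 := (hkey (-1) (by simp)).mapL Complex.ofRealCLM
      have h4 := (hkey (-Complex.I) (by simp [Complex.norm_I])).mapL Complex.ofRealCLM
      have hcomb := (((h1.add (h2.mul_left Complex.I)).sub h3).sub
        (h4.mul_left Complex.I)).mul_left (1/4 : ℂ)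
      have hfun : P = fun j' => (1/4:ℂ) * (Complex.ofRealCLM (A 1 j')
          + Complex.I * Complex.ofRealCLM (A Complex.I j')
          - Complex.ofRealCLM (A (-1) j')
          - Complex.I * Complex.ofRealCLM (A (-Complex.I) j')) := by
        funext j'
        rw [hPA j']
        simp only [Complex.ofRealCLM_apply]
      rw [hfun]
      convert hcomb using 1
      · rfl
      · simp only [Complex.ofRealCLM_apply]
        norm_num
    have hPf : ∀ j', P j' = (if ((2:ℤ)^j' ∣ (n' - n)) then ((2:ℂ)^j') else 0)
        * ∑ m ∈ Finset.Icc 1 (ρ j'), conj (fCoeff (ψ j' m) n) * fCoeff (ψ j' m) n' := by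
      intro j'
      have hterm : ∀ (m : ℕ) (k : ℤ),
          (shiftInner (eF n) (ψ j' m) j' k) * conj (shiftInner (eF n') (ψ j' m) j' k)
          = fourier (n' - n) ((((2:ℝ)^(-(j':ℤ)) * (k:ℝ) : ℝ)) : AddCircle (1:ℝ))
            * (conj (fCoeff (ψ j' m) n) * fCoeff (ψ j' m) n') := by
        intro m k
        rw [shiftInner_eF, shiftInner_eF]
        rw [map_mul, Complex.conj_conj]
        rw [show conj (fourier (-n') ((((2:ℝ)^(-(j':ℤ)) * (k:ℝ) : ℝ)) : AddCircle (1:ℝ)))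
            = fourier n' ((((2:ℝ)^(-(j':ℤ)) * (k:ℝ) : ℝ)) : AddCircle (1:ℝ)) from by
          rw [fourier_neg, Complex.conj_conj]]
        have hc2 : fourier (-n) ((((2:ℝ)^(-(j':ℤ)) * (k:ℝ) : ℝ)) : AddCircle (1:ℝ))
            * fourier n' ((((2:ℝ)^(-(j':ℤ)) * (k:ℝ) : ℝ)) : AddCircle (1:ℝ))
            = fourier (n' - n) ((((2:ℝ)^(-(j':ℤ)) * (k:ℝ) : ℝ)) : AddCircle (1:ℝ)) := by
          rw [← fourier_add, show n' - n = -n + n' from by ring]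
        linear_combination (conj (fCoeff (ψ j' m) n) * fCoeff (ψ j' m) n') * hc2
      simp only [hP]
      simp_rw [hterm]
      rw [← sum_fourier_Rset j' (n' - n), Finset.sum_mul_sum]
      exact Finset.sum_comm
    have hzero : ∀ j' ∉ Finset.range (j+1), P j' = 0 := by
      intro j' hj'
      rw [Finset.mem_range, not_lt] at hj'
      rw [hPf j', if_neg, zero_mul]
      rw [hd]
      intro hdvd
      have h1 : (2:ℤ)^j' = 2^j * 2^(j'-j) := by
        rw [← pow_add]
        congr 1
        omega
      rw [h1] at hdvd
      have h2 : (2:ℤ)^(j'-j) ∣ k₀ :=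
        (mul_dvd_mul_iff_left (pow_ne_zero j (two_ne_zero (α := ℤ)))).mp hdvd
      have h3 : (2:ℤ) ∣ k₀ := dvd_trans (dvd_pow_self 2 (by omega : j' - j ≠ 0)) h2
      omega
    have hfin : ∑ j' ∈ Finset.range (j+1), P j' = 0 :=
      (hasSum_sum_of_ne_finset_zero hzero).unique hPsum
    have hPle : ∀ j', j' ≤ j → P j' = (2:ℂ)^j'
        * ∑ m ∈ Finset.Icc 1 (ρ j'), conj (fCoeff (ψ j' m) n) * fCoeff (ψ j' m) n' := by
      intro j' hj'
      rw [hPf j', if_pos]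
      rw [hd]
      exact Dvd.dvd.mul_right (pow_dvd_pow 2 hj') k₀
    have hbper' : ∀ (j'' m : ℕ), 1 ≤ m → m ≤ ρ j'' → j''+1 ≤ j →
        b (j''+1) m n' = b (j''+1) m n := by
      intro j'' m h1 h2 h3
      have he : n' = n + 2^(j''+1) * (2^(j - (j''+1)) * k₀) := by
        rw [hn']
        rw [show (2:ℤ)^j = 2^(j''+1) * 2^(j-(j''+1)) from by rw [← pow_add]; congr 1; omega]
        ring
      rw [he]
      exact periodic_int (hb_per j'' m h1 h2) n _
    have haper' : ∀ (j'' : ℕ), 1 ≤ j'' → j''+1 ≤ j → a (j''+1) n' = a (j''+1) n := by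
      intro j'' h1 h3
      have he : n' = n + 2^(j''+1) * (2^(j - (j''+1)) * k₀) := by
        rw [hn']
        rw [show (2:ℤ)^j = 2^(j''+1) * 2^(j-(j''+1)) from by rw [← pow_add]; congr 1; omega]
        ring
      rw [he]
      exact periodic_int (ha_per j'' h1) n _
    have hB : ∀ J, J ≤ j → ∑ j' ∈ Finset.range J, P j'
        = (2:ℂ)^J * (conj (fCoeff (φ J) n) * fCoeff (φ J) n')
          * ((theta ρ a b J n : ℝ) : ℂ) := by
      intro J
      induction J with
      | zero => intro _; simp [theta]
      | succ J ih =>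
          intro hJ
          have hJ' : J ≤ j := le_trans (Nat.le_succ J) hJ
          rw [Finset.sum_range_succ, ih hJ', hPle J hJ']
          have hw : ∀ m ∈ Finset.Icc 1 (ρ J), conj (fCoeff (ψ J m) n) * fCoeff (ψ J m) n'
              = 2 * (conj (fCoeff (φ (J+1)) n) * fCoeff (φ (J+1)) n')
                * (((‖b (J+1) m n‖)^2 : ℝ):ℂ) := by
            intro m hm
            rw [Finset.mem_Icc] at hm
            rw [hwav J m hm.1 hm.2 n, hwav J m hm.1 hm.2 n', hbper' J m hm.1 hm.2 hJ,
              ← conj_mul_self_eq]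
            simp only [map_mul, Complex.conj_ofReal]
            linear_combination (conj (b (J+1) m n) * b (J+1) m n
              * conj (fCoeff (φ (J+1)) n) * fCoeff (φ (J+1)) n') * hsqrt2
          rw [Finset.sum_congr rfl hw]
          have hth : ((theta ρ a b (J+1) n : ℝ) : ℂ)
              = (∑ m ∈ Finset.Icc 1 (ρ J), (((‖b (J+1) m n‖)^2 : ℝ):ℂ))
                + ((theta ρ a b J n : ℝ):ℂ) * (((‖a (J+1) n‖)^2 : ℝ):ℂ) := by
            rw [show theta ρ a b (J+1) n
              = (∑ m ∈ Finset.Icc 1 (ρ J), (‖b (J+1) m n‖)^2)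
                + theta ρ a b J n * (‖a (J+1) n‖)^2 from rfl]
            push_cast
            ring
          rw [hth]
          have hphi : (conj (fCoeff (φ J) n) * fCoeff (φ J) n') * ((theta ρ a b J n : ℝ):ℂ)
              = 2 * (((‖a (J+1) n‖)^2 : ℝ):ℂ)
                * (conj (fCoeff (φ (J+1)) n) * fCoeff (φ (J+1)) n')
                * ((theta ρ a b J n : ℝ):ℂ) := by
            cases Nat.eq_zero_or_pos J with
            | inl h0 =>
                rw [h0]
                simp [theta]
            | inr hpos =>
                rw [href J hpos n, href J hpos n', haper' J hpos hJ, ← conj_mul_self_eq]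
                simp only [map_mul, Complex.conj_ofReal]
                linear_combination (conj (a (J+1) n) * a (J+1) n
                  * conj (fCoeff (φ (J+1)) n) * fCoeff (φ (J+1)) n'
                  * ((theta ρ a b J n : ℝ):ℂ)) * hsqrt2
          have hsum2 : ∑ m ∈ Finset.Icc 1 (ρ J),
              2 * (conj (fCoeff (φ (J+1)) n) * fCoeff (φ (J+1)) n')
                * (((‖b (J+1) m n‖)^2 : ℝ):ℂ)
              = 2 * (conj (fCoeff (φ (J+1)) n) * fCoeff (φ (J+1)) n')
                * ∑ m ∈ Finset.Icc 1 (ρ J), (((‖b (J+1) m n‖)^2 : ℝ):ℂ) := by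
            rw [Finset.mul_sum]
          rw [hsum2]
          linear_combination ((2:ℂ)^J) * hphi
    rw [Finset.sum_range_succ, hB j le_rfl, hPle j le_rfl] at hfin
    have hbshift : ∀ (m : ℕ), 1 ≤ m → m ≤ ρ j → b (j+1) m n' = b (j+1) m (n + 2^j) := by
      intro m h1 h2
      have he : n' = (n + 2^j) + 2^(j+1) * q := by rw [hn', hq]; ring
      rw [he]
      exact periodic_int (hb_per j m h1 h2) _ _
    have hwsum : ∑ m ∈ Finset.Icc 1 (ρ j), conj (fCoeff (ψ j m) n) * fCoeff (ψ j m) n'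
        = 2 * (conj (fCoeff (φ (j+1)) n) * fCoeff (φ (j+1)) n')
          * ∑ m ∈ Finset.Icc 1 (ρ j), conj (b (j+1) m n) * b (j+1) m (n + 2^j) := by
      rw [Finset.mul_sum]
      refine Finset.sum_congr rfl fun m hm => ?_
      rw [Finset.mem_Icc] at hm
      rw [hwav j m hm.1 hm.2 n, hwav j m hm.1 hm.2 n', hbshift m hm.1 hm.2]
      simp only [map_mul, Complex.conj_ofReal]
      linear_combination (conj (b (j+1) m n) * b (j+1) m (n + 2^j)
        * conj (fCoeff (φ (j+1)) n) * fCoeff (φ (j+1)) n') * hsqrt2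
    have hphisum : (conj (fCoeff (φ j) n) * fCoeff (φ j) n') * ((theta ρ a b j n : ℝ):ℂ)
        = 2 * (conj (fCoeff (φ (j+1)) n) * fCoeff (φ (j+1)) n')
          * (((theta ρ a b j n : ℝ):ℂ) * conj (a (j+1) n) * a (j+1) (n + 2^j)) := by
      cases Nat.eq_zero_or_pos j with
      | inl h0 =>
          subst h0
          simp [theta]
      | inr hpos =>
          have hashift : a (j+1) n' = a (j+1) (n + 2^j) := by
            have he : n' = (n + 2^j) + 2^(j+1) * q := by rw [hn', hq]; ring
            rw [he]
            exact periodic_int (ha_per j hpos) _ _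
          rw [href j hpos n, href j hpos n', hashift]
          simp only [map_mul, Complex.conj_ofReal]
          linear_combination (((theta ρ a b j n : ℝ):ℂ) * conj (a (j+1) n) * a (j+1) (n + 2^j)
            * conj (fCoeff (φ (j+1)) n) * fCoeff (φ (j+1)) n') * hsqrt2
    have hF : conj (fCoeff (φ (j+1)) n) * fCoeff (φ (j+1)) n' ≠ 0 := by
      apply mul_ne_zero
      · simpa using hφ1
      · exact hφ2
    have hkey2 : (2:ℂ)^(j+1) * (conj (fCoeff (φ (j+1)) n) * fCoeff (φ (j+1)) n')
        * (((theta ρ a b j n : ℝ):ℂ) * conj (a (j+1) n) * a (j+1) (n + 2^j)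
          + ∑ m ∈ Finset.Icc 1 (ρ j), conj (b (j+1) m n) * b (j+1) m (n + 2^j)) = 0 := by
      linear_combination hfin - (2:ℂ)^j * hphisum - (2:ℂ)^j * hwsum
    rcases mul_eq_zero.mp hkey2 with h | h
    · rcases mul_eq_zero.mp h with h' | h'
      · exact absurd h' (pow_ne_zero _ two_ne_zero)
      · exact absurd h' hF
    · exact h

end
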